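/- Let Ω be a finite measure space and M ≥ 0, ω ∈ ℝ, and u^{n+1}, u^n, u^{n−1} ∈ L²(Ω). Then −M·(∫_Ω (2u^n − u^{n−1}) − ω|Ω|)·∫_Ω (u^{n+1} − u^n) ≤ −(M/2)(∫_Ω u^{n+1} − ω|Ω|)² + (M/2)(∫_Ω u^n − ω|Ω|)² + (M/2)|Ω|·(‖u^n − u^{n−1}‖²_{L²} + 2‖u^{n+1} − u^n‖²_{L²}). -/

import Mathlib

open MeasureTheory

/-- Cauchy–Schwarz: `(∫ v)² ≤ |Ω| ∫ v²` for `v ∈ L²`. -/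
lemma sq_integral_le_measure_mul {Ω : Type*} [MeasurableSpace Ω] (μ : Measure Ω)
    [IsFiniteMeasure μ] {v : Ω → ℝ} (hv : MemLp v 2 μ) :
    (∫ x, v x ∂μ) ^ 2 ≤ (μ Set.univ).toReal * ∫ x, v x ^ 2 ∂μ := by
  rcases eq_or_ne μ 0 with rfl | hμ
  · simp
  · haveI : NeZero μ := ⟨hμ⟩
    have hμu : μ Set.univ ≠ 0 := by
      simpa [Measure.measure_univ_eq_zero] using hμ
    set c : ENNReal := (μ Set.univ)⁻¹ with hc
    haveI : IsProbabilityMeasure (c • μ) := MeasureTheory.isProbabilityMeasureSMul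
    have hc_ne : c ≠ ⊤ := by simp [hc, hμu]
    have hvc : MemLp v 2 (c • μ) := hv.smul_measure hc_ne
    have hvar := ProbabilityTheory.variance_nonneg v (c • μ)
    rw [ProbabilityTheory.variance_eq_sub hvc] at hvar
    have hP : (∫ x, v x ∂(c • μ)) ^ 2 ≤ ∫ x, (v ^ 2) x ∂(c • μ) := by linarith
    have hsq : ∀ x, (v ^ 2) x = v x ^ 2 := fun x => rfl
    simp only [hsq, integral_smul_measure] at hP
    have htc : c.toReal = ((μ Set.univ).toReal)⁻¹ := by
      simp [hc, ENNReal.toReal_inv]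
    set t : ℝ := (μ Set.univ).toReal with ht
    have ht0 : 0 < t := by
      refine ENNReal.toReal_pos hμu (measure_ne_top μ _)
    rw [htc] at hP
    simp only [smul_eq_mul] at hP
    have h2 : (t⁻¹ * ∫ x, v x ∂μ) ^ 2 ≤ t⁻¹ * ∫ x, v x ^ 2 ∂μ := hP
    calc (∫ x, v x ∂μ) ^ 2 = (t * (t⁻¹ * ∫ x, v x ∂μ)) ^ 2 := by
          rw [← mul_assoc, mul_inv_cancel₀ ht0.ne', one_mul]
      _ = t ^ 2 * (t⁻¹ * ∫ x, v x ∂μ) ^ 2 := by ring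
      _ ≤ t ^ 2 * (t⁻¹ * ∫ x, v x ^ 2 ∂μ) := by
          exact mul_le_mul_of_nonneg_left h2 (sq_nonneg t)
      _ = t * t⁻¹ * (t * ∫ x, v x ^ 2 ∂μ) := by ring
      _ = t * ∫ x, v x ^ 2 ∂μ := by rw [mul_inv_cancel₀ ht0.ne', one_mul]

/-- Estimate for the penalty term in the BDF2 energy stability proof:
`-M (∫(2uⁿ - uⁿ⁻¹) - ω|Ω|) ∫(uⁿ⁺¹ - uⁿ)
  ≤ -(M/2)(∫ uⁿ⁺¹ - ω|Ω|)² + (M/2)(∫ uⁿ - ω|Ω|)²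
    + (M/2)|Ω| (‖uⁿ - uⁿ⁻¹‖²_{L²} + 2‖uⁿ⁺¹ - uⁿ‖²_{L²})`. -/
theorem penalty_term_estimate
    {Ω : Type*} [MeasurableSpace Ω] (μ : Measure Ω) [IsFiniteMeasure μ]
    (M ω : ℝ) (hM : 0 ≤ M)
    (unp1 un unm1 : Ω → ℝ)
    (h1 : MemLp unp1 2 μ) (h2 : MemLp un 2 μ) (h3 : MemLp unm1 2 μ) :
    -(M * ((∫ x, (2 * un x - unm1 x) ∂μ) - ω * (μ Set.univ).toReal) *
        (∫ x, (unp1 x - un x) ∂μ)) ≤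
      -(M / 2) * ((∫ x, unp1 x ∂μ) - ω * (μ Set.univ).toReal) ^ 2 +
        (M / 2) * ((∫ x, un x ∂μ) - ω * (μ Set.univ).toReal) ^ 2 +
        (M / 2) * (μ Set.univ).toReal *
          ((∫ x, (un x - unm1 x) ^ 2 ∂μ) + 2 * (∫ x, (unp1 x - un x) ^ 2 ∂μ)) := by
  have one_le_two : (1 : ENNReal) ≤ 2 := by norm_num
  have i1 : Integrable unp1 μ := h1.integrable one_le_two
  have i2 : Integrable un μ := h2.integrable one_le_two
  have i3 : Integrable unm1 μ := h3.integrable one_le_two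
  set a : ℝ := ∫ x, unp1 x ∂μ
  set b : ℝ := ∫ x, un x ∂μ
  set cc : ℝ := ∫ x, unm1 x ∂μ
  set T : ℝ := (μ Set.univ).toReal with hT
  have hT0 : 0 ≤ T := ENNReal.toReal_nonneg
  have hlin1 : (∫ x, (2 * un x - unm1 x) ∂μ) = 2 * b - cc := by
    rw [integral_sub (i2.const_mul 2) i3, integral_const_mul]
  have hlin2 : (∫ x, (unp1 x - un x) ∂μ) = a - b := integral_sub i1 i2
  have hlin3 : (∫ x, (un x - unm1 x) ∂μ) = b - cc := integral_sub i2 i3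
  have hcs1 : (b - cc) ^ 2 ≤ T * ∫ x, (un x - unm1 x) ^ 2 ∂μ := by
    have := sq_integral_le_measure_mul μ (h2.sub h3)
    simpa [hlin3] using this
  have hcs2 : (a - b) ^ 2 ≤ T * ∫ x, (unp1 x - un x) ^ 2 ∂μ := by
    have := sq_integral_le_measure_mul μ (h1.sub h2)
    simpa [hlin2] using this
  rw [hlin1, hlin2]
  set P : ℝ := ∫ x, (un x - unm1 x) ^ 2 ∂μ
  set Q : ℝ := ∫ x, (unp1 x - un x) ^ 2 ∂μ
  nlinarith [mul_le_mul_of_nonneg_left hcs1 hM, mul_le_mul_of_nonneg_left hcs2 hM,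
    mul_nonneg hM (sq_nonneg ((b - cc) + (a - b))), mul_nonneg hM (sq_nonneg (a - b))]
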